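/- Suppose there exist b₁ > 1/2 and b₂ ∈ ℝ such that the trilinear convolution estimate ∫_{ξ₁+ξ₂=ξ, τ₁+τ₂=τ} ⟨ξ⟩^{s₁} f(τ₁,ξ₁) g(τ₂,ξ₂) h(τ,ξ) / (⟨ξ₁⟩^{s₁}⟨ξ₂⟩^{s₂}⟨τ₁+ξ₁²⟩^{b₁}⟨τ₂-ξ₂³⟩^{b₂}⟨τ+ξ²⟩^{1-b₁}) ≲ ‖f‖_{L²}‖g‖_{L²}‖h‖_{L²} holds for all nonnegative f,g,h ∈ L²(ℝ²). Then s₂ > s₁ - 5/2. Specifically, with f = χ_{[-2,2]²}(τ,ξ), g(τ,ξ) = χ_{[N,N+1]}(ξ)χ_{[0,1]}(τ-ξ³), h(τ,ξ) = χ_{[N³-10N²,N³+10N²]}(τ)χ_{[N-10,N+10]}(ξ), the left side is ≳ N^{-s₂+s₁-3+3b₁} while ‖f‖‖g‖‖h‖ ∼ N. -/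

import Mathlib

open MeasureTheory Set
open scoped ENNReal

noncomputable section

def jap (x : ℝ) : ℝ := Real.sqrt (1 + x ^ 2)

lemma jap_pos (x : ℝ) : 0 < jap x := Real.sqrt_pos.2 (by positivity)

lemma one_le_jap (x : ℝ) : 1 ≤ jap x := by
  have : (1:ℝ) = Real.sqrt 1 := (Real.sqrt_one).symm
  rw [this, jap]
  exact Real.sqrt_le_sqrt (by nlinarith)

lemma abs_le_jap (x : ℝ) : |x| ≤ jap x := by
  have h : Real.sqrt (x ^ 2) ≤ jap x := Real.sqrt_le_sqrt (by nlinarith)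
  simpa [Real.sqrt_sq_eq_abs] using h

lemma le_jap (x : ℝ) : x ≤ jap x := (le_abs_self x).trans (abs_le_jap x)

lemma jap_le (x : ℝ) : jap x ≤ 1 + |x| := by
  have h : (1:ℝ) + x ^ 2 ≤ (1 + |x|) ^ 2 := by nlinarith [abs_nonneg x, sq_abs x]
  calc jap x ≤ Real.sqrt ((1 + |x|) ^ 2) := Real.sqrt_le_sqrt h
    _ = 1 + |x| := Real.sqrt_sq (by positivity)

lemma continuous_jap : Continuous jap :=
  Real.continuous_sqrt.comp (by continuity)

lemma measurable_jap : Measurable jap := continuous_jap.measurable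

lemma measurable_japrpow (c : ℝ) : Measurable (fun y : ℝ => jap y ^ c) :=
  (continuous_jap.rpow_const (fun x => Or.inl (jap_pos x).ne')).measurable

lemma rpow_sandwich {x A c : ℝ} (s : ℝ) (hA : 0 < A) (hc : 1 ≤ c)
    (h1 : A ≤ x) (h2 : x ≤ c * A) :
    c ^ (-|s|) * A ^ s ≤ x ^ s ∧ x ^ s ≤ c ^ |s| * A ^ s := by
  have hx : 0 < x := lt_of_lt_of_le hA h1
  have hc0 : (0:ℝ) < c := lt_of_lt_of_le one_pos hc
  have ht1 : 1 ≤ x / A := (one_le_div hA).2 h1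
  have ht0 : 0 < x / A := by positivity
  have ht2 : x / A ≤ c := (div_le_iff₀ hA).2 (by linarith)
  have key : (x / A) ^ s * A ^ s = x ^ s := by
    rw [← Real.mul_rpow (le_of_lt ht0) hA.le, div_mul_cancel₀ _ hA.ne']
  have h3 : (x / A) ^ |s| ≤ c ^ |s| := Real.rpow_le_rpow ht0.le ht2 (abs_nonneg s)
  have h4 : (x / A) ^ s ≤ (x / A) ^ |s| :=
    Real.rpow_le_rpow_of_exponent_le ht1 (le_abs_self s)
  have h5 : (x / A) ^ (-|s|) ≤ (x / A) ^ s :=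
    Real.rpow_le_rpow_of_exponent_le ht1 (neg_abs_le s)
  have h6 : c ^ (-|s|) ≤ (x / A) ^ (-|s|) := by
    rw [Real.rpow_neg ht0.le, Real.rpow_neg hc0.le]
    exact inv_anti₀ (by positivity) h3
  have hApow : (0:ℝ) ≤ A ^ s := (Real.rpow_pos_of_pos hA s).le
  constructor
  · calc c ^ (-|s|) * A ^ s ≤ (x / A) ^ s * A ^ s :=
        mul_le_mul_of_nonneg_right (h6.trans h5) hApow
      _ = x ^ s := key
  · calc x ^ s = (x / A) ^ s * A ^ s := key.symm
      _ ≤ c ^ |s| * A ^ s := mul_le_mul_of_nonneg_right (h4.trans h3) hApow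

def ind (a b x : ℝ) : ℝ := (Set.Icc a b).indicator (fun _ => 1) x

lemma ind_nonneg (a b x : ℝ) : 0 ≤ ind a b x :=
  Set.indicator_nonneg (fun _ _ => zero_le_one) x

lemma ind_of_mem {a b x : ℝ} (h : x ∈ Set.Icc a b) : ind a b x = 1 :=
  Set.indicator_of_mem h _

lemma ind_of_not_mem {a b x : ℝ} (h : x ∉ Set.Icc a b) : ind a b x = 0 :=
  Set.indicator_of_notMem h _

lemma ind_integrable (a b : ℝ) : Integrable (ind a b) := by
  unfold ind
  rw [integrable_indicator_iff measurableSet_Icc]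
  exact integrableOn_const (by rw [Real.volume_Icc]; exact ENNReal.ofReal_ne_top)

lemma ind_integral (a b : ℝ) (hab : a ≤ b) : (∫ x, ind a b x) = b - a := by
  unfold ind
  rw [MeasureTheory.integral_indicator_const (1:ℝ) measurableSet_Icc]
  rw [Measure.real, Real.volume_Icc]
  rw [ENNReal.toReal_ofReal (by linarith)]
  simp

lemma sandwich_int {F : ℝ → ℝ} {a b A B : ℝ} (hab : a ≤ b) (hA : 0 ≤ A)
    (hm : AEStronglyMeasurable F volume)
    (hl : ∀ x, A * ind a b x ≤ F x)
    (hu : ∀ x, F x ≤ B * ind a b x) :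
    A * (b - a) ≤ (∫ x, F x) ∧ (∫ x, F x) ≤ B * (b - a) := by
  have hind := ind_integrable a b
  have hindA : Integrable (fun x => A * ind a b x) := hind.const_mul A
  have hindB : Integrable (fun x => B * ind a b x) := hind.const_mul B
  have hFnn : ∀ x, 0 ≤ F x := fun x =>
    le_trans (mul_nonneg hA (ind_nonneg a b x)) (hl x)
  have hFi : Integrable F := by
    refine hindB.mono' hm (Filter.Eventually.of_forall fun x => ?_)
    rw [Real.norm_eq_abs, abs_of_nonneg (hFnn x)]
    exact hu x
  have hintc : ∀ c : ℝ, (∫ x, c * ind a b x) = c * (b - a) := by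
    intro c
    rw [MeasureTheory.integral_const_mul, ind_integral a b hab]
  constructor
  · rw [← hintc A]; exact integral_mono hindA hFi hl
  · rw [← hintc B]; exact integral_mono hFi hindB hu

/-- test area -/
def Ff (N : ℝ) : ℝ × ℝ → ℝ :=
  (Set.Icc 0 (1/2) ×ˢ Set.Icc 0 ((N^2)⁻¹/2)).indicator fun _ => 1

def Gg (N : ℝ) : ℝ × ℝ → ℝ :=
  (Set.Icc (N^3) (N^3+1) ×ˢ Set.Icc N (N+(N^2)⁻¹)).indicator fun _ => 1

def Hh (N : ℝ) : ℝ × ℝ → ℝ :=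
  (Set.Icc (N^3+1/2) (N^3+1) ×ˢ Set.Icc (N+(N^2)⁻¹/2) (N+(N^2)⁻¹)).indicator fun _ => 1

def Wint (s₁ s₂ b₁ b₂ N τ ξ τ₁ ξ₁ : ℝ) : ℝ :=
  jap ξ ^ s₁ * Ff N (τ₁, ξ₁) * Gg N (τ - τ₁, ξ - ξ₁) * Hh N (τ, ξ) /
    (jap ξ₁ ^ s₁ * jap (ξ - ξ₁) ^ s₂ * jap (τ₁ + ξ₁ ^ 2) ^ b₁ *
      jap ((τ - τ₁) - (ξ - ξ₁) ^ 3) ^ b₂ * jap (τ + ξ ^ 2) ^ (1 - b₁))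

lemma measurable_Ff (N : ℝ) : Measurable (Ff N) :=
  measurable_const.indicator (measurableSet_Icc.prod measurableSet_Icc)
lemma measurable_Gg (N : ℝ) : Measurable (Gg N) :=
  measurable_const.indicator (measurableSet_Icc.prod measurableSet_Icc)
lemma measurable_Hh (N : ℝ) : Measurable (Hh N) :=
  measurable_const.indicator (measurableSet_Icc.prod measurableSet_Icc)

lemma Ff_nonneg (N : ℝ) (p : ℝ × ℝ) : 0 ≤ Ff N p :=
  Set.indicator_nonneg (fun _ _ => zero_le_one) p
lemma Gg_nonneg (N : ℝ) (p : ℝ × ℝ) : 0 ≤ Gg N p :=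
  Set.indicator_nonneg (fun _ _ => zero_le_one) p
lemma Hh_nonneg (N : ℝ) (p : ℝ × ℝ) : 0 ≤ Hh N p :=
  Set.indicator_nonneg (fun _ _ => zero_le_one) p

lemma measurable_Wint (s₁ s₂ b₁ b₂ N : ℝ) :
    Measurable (fun q : ((ℝ × ℝ) × ℝ) × ℝ =>
      Wint s₁ s₂ b₁ b₂ N q.1.1.1 q.1.1.2 q.1.2 q.2) := by
  have mτ : Measurable (fun q : ((ℝ × ℝ) × ℝ) × ℝ => q.1.1.1) :=
    measurable_fst.comp (measurable_fst.comp measurable_fst)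
  have mξ : Measurable (fun q : ((ℝ × ℝ) × ℝ) × ℝ => q.1.1.2) :=
    measurable_snd.comp (measurable_fst.comp measurable_fst)
  have mτ₁ : Measurable (fun q : ((ℝ × ℝ) × ℝ) × ℝ => q.1.2) :=
    measurable_snd.comp measurable_fst
  have mξ₁ : Measurable (fun q : ((ℝ × ℝ) × ℝ) × ℝ => q.2) := measurable_snd
  unfold Wint
  apply Measurable.div
  · exact ((((measurable_japrpow s₁).comp mξ).mul
      ((measurable_Ff N).comp (mτ₁.prodMk mξ₁))).mul
      ((measurable_Gg N).comp ((mτ.sub mτ₁).prodMk (mξ.sub mξ₁)))).mul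
      ((measurable_Hh N).comp (mτ.prodMk mξ))
  · exact (((((measurable_japrpow s₁).comp mξ₁).mul
      ((measurable_japrpow s₂).comp (mξ.sub mξ₁))).mul
      ((measurable_japrpow b₁).comp (mτ₁.add (mξ₁.pow measurable_const)))).mul
      ((measurable_japrpow b₂).comp ((mτ.sub mτ₁).sub ((mξ.sub mξ₁).pow measurable_const)))).mul
      ((measurable_japrpow (1-b₁)).comp (mτ.add (mξ.pow measurable_const)))

def Kl (s₁ s₂ b₁ b₂ : ℝ) : ℝ :=
  (2:ℝ)^(-|s₁|) * (2:ℝ)^(-|s₁|) * (2:ℝ)^(-|s₂|) * (2:ℝ)^(-|b₁|) * (8:ℝ)^(-|b₂|) * (2:ℝ)^(-|1-b₁|)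

def Ku (s₁ s₂ b₁ b₂ : ℝ) : ℝ :=
  (2:ℝ)^(|s₁|) * (2:ℝ)^(|s₁|) * (2:ℝ)^(|s₂|) * (2:ℝ)^(|b₁|) * (8:ℝ)^(|b₂|) * (2:ℝ)^(|1-b₁|)

lemma Kl_pos (s₁ s₂ b₁ b₂ : ℝ) : 0 < Kl s₁ s₂ b₁ b₂ := by unfold Kl; positivity
lemma Ku_pos (s₁ s₂ b₁ b₂ : ℝ) : 0 < Ku s₁ s₂ b₁ b₂ := by unfold Ku; positivity

set_option maxHeartbeats 1000000 in
lemma Wint_sandwich (s₁ s₂ b₁ b₂ N : ℝ) (hN : 5 ≤ N) (τ ξ τ₁ ξ₁ : ℝ) :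
    Kl s₁ s₂ b₁ b₂ * N ^ (s₁ - s₂ - 3 + 3*b₁) *
      (ind (N^3+1/2) (N^3+1) τ * ind (N+(N^2)⁻¹/2) (N+(N^2)⁻¹) ξ *
       ind 0 (1/2) τ₁ * ind 0 ((N^2)⁻¹/2) ξ₁) ≤ Wint s₁ s₂ b₁ b₂ N τ ξ τ₁ ξ₁ ∧
    Wint s₁ s₂ b₁ b₂ N τ ξ τ₁ ξ₁ ≤ Ku s₁ s₂ b₁ b₂ * N ^ (s₁ - s₂ - 3 + 3*b₁) *
      (ind (N^3+1/2) (N^3+1) τ * ind (N+(N^2)⁻¹/2) (N+(N^2)⁻¹) ξ *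
       ind 0 (1/2) τ₁ * ind 0 ((N^2)⁻¹/2) ξ₁) := by
  have hN0 : (0:ℝ) < N := by linarith
  set δ : ℝ := (N^2)⁻¹ with hδ
  have hδ0 : 0 < δ := by positivity
  have hδN : δ * N^2 = 1 := inv_mul_cancel₀ (by positivity)
  have hδ1 : δ ≤ 1 := by nlinarith
  by_cases h₁ : τ ∈ Set.Icc (N^3+1/2) (N^3+1)
  case neg =>
    have hh0 : Hh N (τ, ξ) = 0 := Set.indicator_of_notMem (fun hc => h₁ hc.1) _
    have hW : Wint s₁ s₂ b₁ b₂ N τ ξ τ₁ ξ₁ = 0 := by unfold Wint; rw [hh0]; simp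
    rw [hW, ind_of_not_mem h₁]
    constructor <;> simp
  case pos =>
  by_cases h₂ : ξ ∈ Set.Icc (N+δ/2) (N+δ)
  case neg =>
    have hh0 : Hh N (τ, ξ) = 0 := Set.indicator_of_notMem (fun hc => h₂ hc.2) _
    have hW : Wint s₁ s₂ b₁ b₂ N τ ξ τ₁ ξ₁ = 0 := by unfold Wint; rw [hh0]; simp
    rw [hW, ind_of_not_mem h₂]
    constructor <;> simp
  case pos =>
  by_cases h₃ : τ₁ ∈ Set.Icc (0:ℝ) (1/2)
  case neg =>
    have hf0 : Ff N (τ₁, ξ₁) = 0 := Set.indicator_of_notMem (fun hc => h₃ hc.1) _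
    have hW : Wint s₁ s₂ b₁ b₂ N τ ξ τ₁ ξ₁ = 0 := by unfold Wint; rw [hf0]; simp
    rw [hW, ind_of_not_mem h₃]
    constructor <;> simp
  case pos =>
  by_cases h₄ : ξ₁ ∈ Set.Icc (0:ℝ) (δ/2)
  case neg =>
    have hf0 : Ff N (τ₁, ξ₁) = 0 := Set.indicator_of_notMem (fun hc => h₄ hc.2) _
    have hW : Wint s₁ s₂ b₁ b₂ N τ ξ τ₁ ξ₁ = 0 := by unfold Wint; rw [hf0]; simp
    rw [hW, ind_of_not_mem h₄]
    constructor <;> simp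
  case pos =>
  obtain ⟨hτl, hτu⟩ := h₁
  obtain ⟨hξl, hξu⟩ := h₂
  obtain ⟨hτ₁l, hτ₁u⟩ := h₃
  obtain ⟨hξ₁l, hξ₁u⟩ := h₄
  -- indicator values
  have hf1 : Ff N (τ₁, ξ₁) = 1 := by
    unfold Ff
    apply Set.indicator_of_mem
    simp only [Set.mem_prod, Set.mem_Icc]
    exact ⟨⟨hτ₁l, hτ₁u⟩, ⟨hξ₁l, hξ₁u⟩⟩
  have hh1 : Hh N (τ, ξ) = 1 := by
    unfold Hh
    apply Set.indicator_of_mem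
    simp only [Set.mem_prod, Set.mem_Icc]
    exact ⟨⟨hτl, hτu⟩, ⟨hξl, hξu⟩⟩
  have hg1 : Gg N (τ - τ₁, ξ - ξ₁) = 1 := by
    unfold Gg
    apply Set.indicator_of_mem
    simp only [Set.mem_prod, Set.mem_Icc]
    exact ⟨⟨by linarith, by linarith⟩, ⟨by linarith, by linarith⟩⟩
  -- factor bounds
  have B1 : (2:ℝ)^(-|s₁|) * N^s₁ ≤ jap ξ ^ s₁ ∧ jap ξ ^ s₁ ≤ (2:ℝ)^(|s₁|) * N^s₁ := by
    refine rpow_sandwich s₁ hN0 one_le_two (le_trans (by linarith) (le_jap ξ)) ?_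
    have := jap_le ξ
    rw [abs_of_nonneg (by linarith : (0:ℝ) ≤ ξ)] at this
    linarith
  have B2 : (2:ℝ)^(-|s₁|) * (1:ℝ)^s₁ ≤ jap ξ₁ ^ s₁ ∧ jap ξ₁ ^ s₁ ≤ (2:ℝ)^(|s₁|) * (1:ℝ)^s₁ := by
    refine rpow_sandwich s₁ one_pos one_le_two (one_le_jap ξ₁) ?_
    have := jap_le ξ₁
    rw [abs_of_nonneg (by linarith : (0:ℝ) ≤ ξ₁)] at this
    linarith
  have B3 : (2:ℝ)^(-|s₂|) * N^s₂ ≤ jap (ξ - ξ₁) ^ s₂ ∧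
      jap (ξ - ξ₁) ^ s₂ ≤ (2:ℝ)^(|s₂|) * N^s₂ := by
    refine rpow_sandwich s₂ hN0 one_le_two (le_trans (by linarith) (le_jap _)) ?_
    have := jap_le (ξ - ξ₁)
    rw [abs_of_nonneg (by linarith : (0:ℝ) ≤ ξ - ξ₁)] at this
    linarith
  have B4 : (2:ℝ)^(-|b₁|) * (1:ℝ)^b₁ ≤ jap (τ₁ + ξ₁^2) ^ b₁ ∧
      jap (τ₁ + ξ₁^2) ^ b₁ ≤ (2:ℝ)^(|b₁|) * (1:ℝ)^b₁ := by
    refine rpow_sandwich b₁ one_pos one_le_two (one_le_jap _) ?_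
    have h := jap_le (τ₁ + ξ₁^2)
    have ha : (0:ℝ) ≤ τ₁ + ξ₁^2 := by positivity
    rw [abs_of_nonneg ha] at h
    nlinarith
  have B5 : (8:ℝ)^(-|b₂|) * (1:ℝ)^b₂ ≤ jap ((τ - τ₁) - (ξ - ξ₁)^3) ^ b₂ ∧
      jap ((τ - τ₁) - (ξ - ξ₁)^3) ^ b₂ ≤ (8:ℝ)^(|b₂|) * (1:ℝ)^b₂ := by
    refine rpow_sandwich b₂ one_pos (by norm_num) (one_le_jap _) ?_
    have hu1 : N ≤ ξ - ξ₁ := by linarith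
    have hu2 : ξ - ξ₁ ≤ N + δ := by linarith
    have hNδN : N * δ * N = 1 := by nlinarith [hδN]
    have h5 : N * δ ≤ 1 := by nlinarith [hδN, hN0]
    have hA : 3*(N^2)*δ = 3 := by linear_combination 3*hδN
    have hB : 3*N*δ^2 ≤ 3*δ := by nlinarith [mul_le_mul_of_nonneg_left h5 (by positivity : (0:ℝ) ≤ 3*δ)]
    have hC : δ^3 ≤ 1 := by nlinarith [hδ1, hδ0.le]
    have hcube : (N + δ)^3 ≤ N^3 + 7 := by nlinarith [hA, hB, hC, hδ1, hδ0.le]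
    have hu3 : (ξ - ξ₁)^3 ≤ N^3 + 7 :=
      le_trans (pow_le_pow_left₀ (by linarith) hu2 3) hcube
    have hu4 : N^3 ≤ (ξ - ξ₁)^3 := pow_le_pow_left₀ hN0.le hu1 3
    have habs : |(τ - τ₁) - (ξ - ξ₁)^3| ≤ 7 := abs_le.2 ⟨by linarith, by linarith⟩
    have h := jap_le ((τ - τ₁) - (ξ - ξ₁)^3)
    linarith
  have B6 : (2:ℝ)^(-|1-b₁|) * ((N^3:ℝ))^(1-b₁) ≤ jap (τ + ξ^2) ^ (1-b₁) ∧
      jap (τ + ξ^2) ^ (1-b₁) ≤ (2:ℝ)^(|1-b₁|) * ((N^3:ℝ))^(1-b₁) := by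
    refine rpow_sandwich (1-b₁) (by positivity) one_le_two
      (le_trans (by nlinarith) (le_jap _)) ?_
    have h := jap_le (τ + ξ^2)
    have ha : (0:ℝ) ≤ τ + ξ^2 := by nlinarith
    rw [abs_of_nonneg ha] at h
    have hξ2 : ξ^2 ≤ (N+1)^2 := by nlinarith
    nlinarith
  have hpow3 : ((N^3:ℝ))^(1-b₁) = N ^ (3*(1-b₁)) := by
    rw [← Real.rpow_natCast N 3, ← Real.rpow_mul hN0.le]
    norm_num
  rw [hpow3] at B6
  simp only [Real.one_rpow, mul_one] at B2 B4 B5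
  -- denominators
  have d2 := Real.rpow_pos_of_pos (jap_pos ξ₁) s₁
  have d3 := Real.rpow_pos_of_pos (jap_pos (ξ - ξ₁)) s₂
  have d4 := Real.rpow_pos_of_pos (jap_pos (τ₁ + ξ₁^2)) b₁
  have d5 := Real.rpow_pos_of_pos (jap_pos ((τ - τ₁) - (ξ - ξ₁)^3)) b₂
  have d6 := Real.rpow_pos_of_pos (jap_pos (τ + ξ^2)) (1-b₁)
  have hD : 0 < jap ξ₁ ^ s₁ * jap (ξ - ξ₁) ^ s₂ * jap (τ₁ + ξ₁ ^ 2) ^ b₁ *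
      jap ((τ - τ₁) - (ξ - ξ₁) ^ 3) ^ b₂ * jap (τ + ξ ^ 2) ^ (1 - b₁) :=
    mul_pos (mul_pos (mul_pos (mul_pos d2 d3) d4) d5) d6
  have u2 : (0:ℝ) ≤ (2:ℝ)^(|s₁|) := by positivity
  have u3 : (0:ℝ) ≤ (2:ℝ)^(|s₂|) * N^s₂ :=
    (mul_pos (Real.rpow_pos_of_pos two_pos _) (Real.rpow_pos_of_pos hN0 _)).le
  have u4 : (0:ℝ) ≤ (2:ℝ)^(|b₁|) := by positivity
  have u5 : (0:ℝ) ≤ (8:ℝ)^(|b₂|) := by positivity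
  have u6 : (0:ℝ) ≤ (2:ℝ)^(|1-b₁|) * N^(3*(1-b₁)) :=
    (mul_pos (Real.rpow_pos_of_pos two_pos _) (Real.rpow_pos_of_pos hN0 _)).le
  have hDle : jap ξ₁ ^ s₁ * jap (ξ - ξ₁) ^ s₂ * jap (τ₁ + ξ₁ ^ 2) ^ b₁ *
      jap ((τ - τ₁) - (ξ - ξ₁) ^ 3) ^ b₂ * jap (τ + ξ ^ 2) ^ (1 - b₁) ≤
      (2:ℝ)^(|s₁|) * ((2:ℝ)^(|s₂|) * N^s₂) * (2:ℝ)^(|b₁|) * (8:ℝ)^(|b₂|) *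
      ((2:ℝ)^(|1-b₁|) * N^(3*(1-b₁))) :=
    mul_le_mul (mul_le_mul (mul_le_mul (mul_le_mul B2.2 B3.2 d3.le u2)
      B4.2 d4.le (mul_nonneg u2 u3)) B5.2 d5.le (mul_nonneg (mul_nonneg u2 u3) u4))
      B6.2 d6.le (mul_nonneg (mul_nonneg (mul_nonneg u2 u3) u4) u5)
  have hDge : (2:ℝ)^(-|s₁|) * ((2:ℝ)^(-|s₂|) * N^s₂) * (2:ℝ)^(-|b₁|) * (8:ℝ)^(-|b₂|) *
      ((2:ℝ)^(-|1-b₁|) * N^(3*(1-b₁))) ≤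
      jap ξ₁ ^ s₁ * jap (ξ - ξ₁) ^ s₂ * jap (τ₁ + ξ₁ ^ 2) ^ b₁ *
      jap ((τ - τ₁) - (ξ - ξ₁) ^ 3) ^ b₂ * jap (τ + ξ ^ 2) ^ (1 - b₁) := by
    have l2 : (0:ℝ) ≤ (2:ℝ)^(-|s₁|) := by positivity
    have l3 : (0:ℝ) ≤ (2:ℝ)^(-|s₂|) * N^s₂ :=
      (mul_pos (Real.rpow_pos_of_pos two_pos _) (Real.rpow_pos_of_pos hN0 _)).le
    have l4 : (0:ℝ) ≤ (2:ℝ)^(-|b₁|) := by positivity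
    have l5 : (0:ℝ) ≤ (8:ℝ)^(-|b₂|) := by positivity
    have l6 : (0:ℝ) ≤ (2:ℝ)^(-|1-b₁|) * N^(3*(1-b₁)) :=
      (mul_pos (Real.rpow_pos_of_pos two_pos _) (Real.rpow_pos_of_pos hN0 _)).le
    exact mul_le_mul (mul_le_mul (mul_le_mul (mul_le_mul B2.1 B3.1 l3 d2.le)
      B4.1 l4 (mul_nonneg d2.le d3.le)) B5.1 l5
      (mul_nonneg (mul_nonneg d2.le d3.le) d4.le))
      B6.1 l6 (mul_nonneg (mul_nonneg (mul_nonneg d2.le d3.le) d4.le) d5.le)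
  have c2 : ∀ a : ℝ, (2:ℝ)^(-a) * (2:ℝ)^a = 1 := fun a => by
    rw [← Real.rpow_add two_pos]; simp
  have c8 : (8:ℝ)^(-|b₂|) * (8:ℝ)^(|b₂|) = 1 := by
    rw [← Real.rpow_add (by norm_num : (0:ℝ) < 8)]; simp
  have hNs : N^(s₁ - s₂ - 3 + 3*b₁) * (N^s₂ * N^(3*(1-b₁))) = N^s₁ := by
    rw [← Real.rpow_add hN0 s₂ (3*(1-b₁)), ← Real.rpow_add hN0]
    congr 1; ring
  rw [ind_of_mem ⟨hτl, hτu⟩, ind_of_mem ⟨hξl, hξu⟩, ind_of_mem ⟨hτ₁l, hτ₁u⟩,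
    ind_of_mem ⟨hξ₁l, hξ₁u⟩]
  unfold Wint
  rw [hf1, hg1, hh1]
  simp only [mul_one]
  have hKlN : (0:ℝ) ≤ Kl s₁ s₂ b₁ b₂ * N ^ (s₁ - s₂ - 3 + 3*b₁) :=
    (mul_pos (Kl_pos s₁ s₂ b₁ b₂) (Real.rpow_pos_of_pos hN0 _)).le
  have hKuN : (0:ℝ) ≤ Ku s₁ s₂ b₁ b₂ * N ^ (s₁ - s₂ - 3 + 3*b₁) :=
    (mul_pos (Ku_pos s₁ s₂ b₁ b₂) (Real.rpow_pos_of_pos hN0 _)).le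
  constructor
  · rw [le_div_iff₀ hD]
    calc Kl s₁ s₂ b₁ b₂ * N ^ (s₁ - s₂ - 3 + 3*b₁) *
          (jap ξ₁ ^ s₁ * jap (ξ - ξ₁) ^ s₂ * jap (τ₁ + ξ₁ ^ 2) ^ b₁ *
            jap ((τ - τ₁) - (ξ - ξ₁) ^ 3) ^ b₂ * jap (τ + ξ ^ 2) ^ (1 - b₁))
        ≤ Kl s₁ s₂ b₁ b₂ * N ^ (s₁ - s₂ - 3 + 3*b₁) *
          ((2:ℝ)^(|s₁|) * ((2:ℝ)^(|s₂|) * N^s₂) * (2:ℝ)^(|b₁|) * (8:ℝ)^(|b₂|) *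
            ((2:ℝ)^(|1-b₁|) * N^(3*(1-b₁)))) :=
          mul_le_mul_of_nonneg_left hDle hKlN
      _ = (2:ℝ)^(-|s₁|) * (N^(s₁ - s₂ - 3 + 3*b₁) * (N^s₂ * N^(3*(1-b₁)))) *
          (((2:ℝ)^(-|s₁|) * (2:ℝ)^(|s₁|)) * ((2:ℝ)^(-|s₂|) * (2:ℝ)^(|s₂|)) *
           ((2:ℝ)^(-|b₁|) * (2:ℝ)^(|b₁|)) * ((8:ℝ)^(-|b₂|) * (8:ℝ)^(|b₂|)) *
           ((2:ℝ)^(-|1-b₁|) * (2:ℝ)^(|1-b₁|))) := by unfold Kl; ring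
      _ = (2:ℝ)^(-|s₁|) * N^s₁ := by rw [hNs, c2, c2, c2, c2, c8]; ring
      _ ≤ jap ξ ^ s₁ := B1.1
  · rw [div_le_iff₀ hD]
    calc jap ξ ^ s₁ ≤ (2:ℝ)^(|s₁|) * N^s₁ := B1.2
      _ = (2:ℝ)^(|s₁|) * (N^(s₁ - s₂ - 3 + 3*b₁) * (N^s₂ * N^(3*(1-b₁)))) *
          (((2:ℝ)^(-|s₁|) * (2:ℝ)^(|s₁|)) * ((2:ℝ)^(-|s₂|) * (2:ℝ)^(|s₂|)) *
           ((2:ℝ)^(-|b₁|) * (2:ℝ)^(|b₁|)) * ((8:ℝ)^(-|b₂|) * (8:ℝ)^(|b₂|)) *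
           ((2:ℝ)^(-|1-b₁|) * (2:ℝ)^(|1-b₁|))) := by rw [hNs, c2, c2, c2, c2, c8]; ring
      _ = Ku s₁ s₂ b₁ b₂ * N ^ (s₁ - s₂ - 3 + 3*b₁) *
          ((2:ℝ)^(-|s₁|) * ((2:ℝ)^(-|s₂|) * N^s₂) * (2:ℝ)^(-|b₁|) * (8:ℝ)^(-|b₂|) *
            ((2:ℝ)^(-|1-b₁|) * N^(3*(1-b₁)))) := by unfold Ku; ring
      _ ≤ Ku s₁ s₂ b₁ b₂ * N ^ (s₁ - s₂ - 3 + 3*b₁) *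
          (jap ξ₁ ^ s₁ * jap (ξ - ξ₁) ^ s₂ * jap (τ₁ + ξ₁ ^ 2) ^ b₁ *
            jap ((τ - τ₁) - (ξ - ξ₁) ^ 3) ^ b₂ * jap (τ + ξ ^ 2) ^ (1 - b₁)) :=
          mul_le_mul_of_nonneg_left hDge hKuN


lemma measurable_Wint_comp {α : Type*} [MeasurableSpace α] (s₁ s₂ b₁ b₂ N : ℝ)
    {a b c d : α → ℝ} (ha : Measurable a) (hb : Measurable b) (hc : Measurable c)
    (hd : Measurable d) :
    Measurable (fun x => Wint s₁ s₂ b₁ b₂ N (a x) (b x) (c x) (d x)) := by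
  unfold Wint
  apply Measurable.div
  · exact ((((measurable_japrpow s₁).comp hb).mul
      ((measurable_Ff N).comp (hc.prodMk hd))).mul
      ((measurable_Gg N).comp ((ha.sub hc).prodMk (hb.sub hd)))).mul
      ((measurable_Hh N).comp (ha.prodMk hb))
  · exact (((((measurable_japrpow s₁).comp hd).mul
      ((measurable_japrpow s₂).comp (hb.sub hd))).mul
      ((measurable_japrpow b₁).comp (hc.add (hd.pow measurable_const)))).mul
      ((measurable_japrpow b₂).comp ((ha.sub hc).sub ((hb.sub hd).pow measurable_const)))).mul
      ((measurable_japrpow (1-b₁)).comp (ha.add (hb.pow measurable_const)))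

set_option maxHeartbeats 1000000 in
lemma Wint_integral_lower (s₁ s₂ b₁ b₂ N : ℝ) (hN : 5 ≤ N) :
    Kl s₁ s₂ b₁ b₂ * N ^ (s₁ - s₂ - 3 + 3*b₁) *
      (((N^2)⁻¹/2 - 0) * (1/2 - 0) * ((N^2)⁻¹/2 - 0) * (1/2 - 0)) ≤
    ∫ τ : ℝ, ∫ ξ : ℝ, ∫ τ₁ : ℝ, ∫ ξ₁ : ℝ, Wint s₁ s₂ b₁ b₂ N τ ξ τ₁ ξ₁ := by
  have hN0 : (0:ℝ) < N := by linarith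
  have hδ0 : (0:ℝ) < (N^2)⁻¹ := by positivity
  have hκ0 : 0 ≤ Kl s₁ s₂ b₁ b₂ * N ^ (s₁ - s₂ - 3 + 3*b₁) :=
    (mul_pos (Kl_pos s₁ s₂ b₁ b₂) (Real.rpow_pos_of_pos hN0 _)).le
  have psw := Wint_sandwich s₁ s₂ b₁ b₂ N hN
  have i1n : ∀ x, 0 ≤ ind (N^3+1/2) (N^3+1) x := fun x => ind_nonneg _ _ x
  have i2n : ∀ x, 0 ≤ ind (N+(N^2)⁻¹/2) (N+(N^2)⁻¹) x := fun x => ind_nonneg _ _ x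
  have i3n : ∀ x, 0 ≤ ind 0 (1/2) x := fun x => ind_nonneg _ _ x
  -- Level 1 : integrate in ξ₁
  have L1 : ∀ τ ξ τ₁ : ℝ,
      (Kl s₁ s₂ b₁ b₂ * N ^ (s₁ - s₂ - 3 + 3*b₁) *
        (ind (N^3+1/2) (N^3+1) τ * ind (N+(N^2)⁻¹/2) (N+(N^2)⁻¹) ξ * ind 0 (1/2) τ₁)) *
        ((N^2)⁻¹/2 - 0) ≤ (∫ ξ₁, Wint s₁ s₂ b₁ b₂ N τ ξ τ₁ ξ₁) ∧
      (∫ ξ₁, Wint s₁ s₂ b₁ b₂ N τ ξ τ₁ ξ₁) ≤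
      (Ku s₁ s₂ b₁ b₂ * N ^ (s₁ - s₂ - 3 + 3*b₁) *
        (ind (N^3+1/2) (N^3+1) τ * ind (N+(N^2)⁻¹/2) (N+(N^2)⁻¹) ξ * ind 0 (1/2) τ₁)) *
        ((N^2)⁻¹/2 - 0) := by
    intro τ ξ τ₁
    have hm : AEStronglyMeasurable (fun ξ₁ => Wint s₁ s₂ b₁ b₂ N τ ξ τ₁ ξ₁) volume :=
      (measurable_Wint_comp s₁ s₂ b₁ b₂ N measurable_const measurable_const
        measurable_const measurable_id).aestronglyMeasurable
    refine sandwich_int (by linarith) ?_ hm ?_ ?_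
    · exact mul_nonneg hκ0 (mul_nonneg (mul_nonneg (i1n τ) (i2n ξ)) (i3n τ₁))
    · intro x
      exact le_trans (le_of_eq (by ring)) ((psw τ ξ τ₁ x).1)
    · intro x
      exact le_trans ((psw τ ξ τ₁ x).2) (le_of_eq (by ring))
  -- Level 2 : integrate in τ₁
  have L2 : ∀ τ ξ : ℝ,
      ((Kl s₁ s₂ b₁ b₂ * N ^ (s₁ - s₂ - 3 + 3*b₁) * ((N^2)⁻¹/2 - 0)) *
        (ind (N^3+1/2) (N^3+1) τ * ind (N+(N^2)⁻¹/2) (N+(N^2)⁻¹) ξ)) * (1/2 - 0) ≤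
        (∫ τ₁, ∫ ξ₁, Wint s₁ s₂ b₁ b₂ N τ ξ τ₁ ξ₁) ∧
      (∫ τ₁, ∫ ξ₁, Wint s₁ s₂ b₁ b₂ N τ ξ τ₁ ξ₁) ≤
      ((Ku s₁ s₂ b₁ b₂ * N ^ (s₁ - s₂ - 3 + 3*b₁) * ((N^2)⁻¹/2 - 0)) *
        (ind (N^3+1/2) (N^3+1) τ * ind (N+(N^2)⁻¹/2) (N+(N^2)⁻¹) ξ)) * (1/2 - 0) := by
    intro τ ξ
    have hm : AEStronglyMeasurable
        (fun τ₁ => ∫ ξ₁, Wint s₁ s₂ b₁ b₂ N τ ξ τ₁ ξ₁) volume :=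
      ((measurable_Wint_comp s₁ s₂ b₁ b₂ N (measurable_const (a := τ)) measurable_const
          measurable_fst measurable_snd).stronglyMeasurable.integral_prod_right' :
        StronglyMeasurable fun τ₁ => ∫ ξ₁, Wint s₁ s₂ b₁ b₂ N τ ξ τ₁ ξ₁).aestronglyMeasurable
    refine sandwich_int (by norm_num) ?_ hm ?_ ?_
    · exact mul_nonneg (mul_nonneg hκ0 (by linarith)) (mul_nonneg (i1n τ) (i2n ξ))
    · intro x
      exact le_trans (le_of_eq (by ring)) ((L1 τ ξ x).1)
    · intro x
      exact le_trans ((L1 τ ξ x).2) (le_of_eq (by ring))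
  -- Level 3 : integrate in ξ
  have L3 : ∀ τ : ℝ,
      ((Kl s₁ s₂ b₁ b₂ * N ^ (s₁ - s₂ - 3 + 3*b₁) * ((N^2)⁻¹/2 - 0) * (1/2 - 0)) *
        ind (N^3+1/2) (N^3+1) τ) * ((N+(N^2)⁻¹) - (N+(N^2)⁻¹/2)) ≤
        (∫ ξ, ∫ τ₁, ∫ ξ₁, Wint s₁ s₂ b₁ b₂ N τ ξ τ₁ ξ₁) ∧
      (∫ ξ, ∫ τ₁, ∫ ξ₁, Wint s₁ s₂ b₁ b₂ N τ ξ τ₁ ξ₁) ≤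
      ((Ku s₁ s₂ b₁ b₂ * N ^ (s₁ - s₂ - 3 + 3*b₁) * ((N^2)⁻¹/2 - 0) * (1/2 - 0)) *
        ind (N^3+1/2) (N^3+1) τ) * ((N+(N^2)⁻¹) - (N+(N^2)⁻¹/2)) := by
    intro τ
    have hm : AEStronglyMeasurable
        (fun ξ => ∫ τ₁, ∫ ξ₁, Wint s₁ s₂ b₁ b₂ N τ ξ τ₁ ξ₁) volume :=
      ((measurable_Wint_comp s₁ s₂ b₁ b₂ N (measurable_const (a := τ))
          (measurable_fst.comp measurable_fst) (measurable_snd.comp measurable_fst)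
          measurable_snd).stronglyMeasurable.integral_prod_right'.integral_prod_right' :
        StronglyMeasurable fun ξ => ∫ τ₁, ∫ ξ₁, Wint s₁ s₂ b₁ b₂ N τ ξ τ₁ ξ₁).aestronglyMeasurable
    refine sandwich_int (a := N+(N^2)⁻¹/2) (b := N+(N^2)⁻¹) (by linarith) ?_ hm ?_ ?_
    · exact mul_nonneg (mul_nonneg (mul_nonneg hκ0 (by linarith)) (by norm_num)) (i1n τ)
    · intro x
      exact le_trans (le_of_eq (by ring)) ((L2 τ x).1)
    · intro x
      exact le_trans ((L2 τ x).2) (le_of_eq (by ring))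
  -- Level 4 : integrate in τ
  have L4 :
      ((Kl s₁ s₂ b₁ b₂ * N ^ (s₁ - s₂ - 3 + 3*b₁) * ((N^2)⁻¹/2 - 0) * (1/2 - 0) *
        ((N+(N^2)⁻¹) - (N+(N^2)⁻¹/2)))) * ((N^3+1) - (N^3+1/2)) ≤
        ∫ τ, ∫ ξ, ∫ τ₁, ∫ ξ₁, Wint s₁ s₂ b₁ b₂ N τ ξ τ₁ ξ₁ := by
    have hm : AEStronglyMeasurable
        (fun τ => ∫ ξ, ∫ τ₁, ∫ ξ₁, Wint s₁ s₂ b₁ b₂ N τ ξ τ₁ ξ₁) volume :=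
      ((measurable_Wint_comp s₁ s₂ b₁ b₂ N
          (measurable_fst.comp (measurable_fst.comp measurable_fst))
          (measurable_snd.comp (measurable_fst.comp measurable_fst))
          (measurable_snd.comp measurable_fst)
          measurable_snd).stronglyMeasurable.integral_prod_right'.integral_prod_right'.integral_prod_right' :
        StronglyMeasurable fun τ => ∫ ξ, ∫ τ₁, ∫ ξ₁,
          Wint s₁ s₂ b₁ b₂ N τ ξ τ₁ ξ₁).aestronglyMeasurable
    refine (sandwich_int (a := N^3+1/2) (b := N^3+1)
      (B := Ku s₁ s₂ b₁ b₂ * N ^ (s₁ - s₂ - 3 + 3*b₁) * ((N^2)⁻¹/2 - 0) * (1/2 - 0) *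
        ((N+(N^2)⁻¹) - (N+(N^2)⁻¹/2)))
      (by linarith) ?_ hm ?_ ?_).1
    · exact mul_nonneg (mul_nonneg (mul_nonneg hκ0 (by linarith)) (by norm_num)) (by linarith)
    · intro x
      exact le_trans (le_of_eq (by ring)) ((L3 x).1)
    · intro x
      exact le_trans ((L3 x).2) (le_of_eq (by ring))
  exact le_trans (le_of_eq (by ring)) L4

lemma eLpNorm_box (a b c d : ℝ) (hab : a ≤ b) (hcd : c ≤ d) :
    eLpNorm (((Set.Icc a b ×ˢ Set.Icc c d).indicator (fun _ => 1)) : ℝ × ℝ → ℝ) 2 volume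
      = ENNReal.ofReal (((b-a)*(d-c)) ^ (1/2 : ℝ)) := by
  rw [eLpNorm_indicator_const (measurableSet_Icc.prod measurableSet_Icc) two_ne_zero
    ENNReal.ofNat_ne_top]
  have hvol : volume (Set.Icc a b ×ˢ Set.Icc c d) = ENNReal.ofReal ((b-a)*(d-c)) := by
    rw [Measure.volume_eq_prod, Measure.prod_prod, Real.volume_Icc, Real.volume_Icc,
      ← ENNReal.ofReal_mul (by linarith)]
  rw [hvol]
  simp only [nnnorm_one, enorm_one, ENNReal.coe_one, one_mul, ENNReal.toReal_ofNat]
  rcases eq_or_lt_of_le (mul_nonneg (by linarith : (0:ℝ) ≤ b - a)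
    (by linarith : (0:ℝ) ≤ d - c)) with h | h
  · rw [← h]
    simp [ENNReal.ofReal_zero, ENNReal.zero_rpow_of_pos (by norm_num : (0:ℝ) < 1/2),
      Real.zero_rpow (by norm_num : (1/2 : ℝ) ≠ 0)]
  · exact ENNReal.ofReal_rpow_of_pos h

set_option maxHeartbeats 1000000 in
lemma key_ineq (s₁ s₂ b₁ b₂ C N : ℝ) (hC : 0 < C) (hN : 5 ≤ N)
    (hmain : ENNReal.ofReal (∫ τ : ℝ, ∫ ξ : ℝ, ∫ τ₁ : ℝ, ∫ ξ₁ : ℝ,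
        Wint s₁ s₂ b₁ b₂ N τ ξ τ₁ ξ₁) ≤
      ENNReal.ofReal C * eLpNorm (Ff N) 2 volume * eLpNorm (Gg N) 2 volume *
        eLpNorm (Hh N) 2 volume) :
    N ^ (s₁ - s₂ + 3*b₁ - 4) ≤ 4 * C / Kl s₁ s₂ b₁ b₂ := by
  have hN0 : (0:ℝ) < N := by linarith
  have hδ0 : (0:ℝ) < (N^2)⁻¹ := by positivity
  -- norms
  have eF : eLpNorm (Ff N) 2 volume =
      ENNReal.ofReal (((1/2 - 0) * ((N^2)⁻¹/2 - 0)) ^ (1/2 : ℝ)) := by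
    unfold Ff
    exact eLpNorm_box 0 (1/2) 0 ((N^2)⁻¹/2) (by norm_num) (by positivity)
  have eG : eLpNorm (Gg N) 2 volume =
      ENNReal.ofReal (((N^3+1 - N^3) * ((N+(N^2)⁻¹) - N)) ^ (1/2 : ℝ)) := by
    unfold Gg
    exact eLpNorm_box (N^3) (N^3+1) N (N+(N^2)⁻¹) (by linarith) (by linarith)
  have eH : eLpNorm (Hh N) 2 volume =
      ENNReal.ofReal (((N^3+1 - (N^3+1/2)) * ((N+(N^2)⁻¹) - (N+(N^2)⁻¹/2))) ^ (1/2 : ℝ)) := by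
    unfold Hh
    exact eLpNorm_box (N^3+1/2) (N^3+1) (N+(N^2)⁻¹/2) (N+(N^2)⁻¹) (by linarith) (by linarith)
  have e1 : ((1/2 - 0) * ((N^2)⁻¹/2 - 0)) = (N^2)⁻¹/4 := by ring
  have e2 : ((N^3+1 - N^3) * ((N+(N^2)⁻¹) - N)) = (N^2)⁻¹ := by ring
  have e3 : ((N^3+1 - (N^3+1/2)) * ((N+(N^2)⁻¹) - (N+(N^2)⁻¹/2))) = (N^2)⁻¹/4 := by ring
  rw [e1] at eF; rw [e2] at eG; rw [e3] at eH
  -- real-valued RHS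
  have ha0 : (0:ℝ) ≤ ((N^2)⁻¹/4) ^ (1/2:ℝ) := Real.rpow_nonneg (by positivity) _
  have hb0 : (0:ℝ) ≤ ((N^2)⁻¹) ^ (1/2:ℝ) := Real.rpow_nonneg (by positivity) _
  have hR : ENNReal.ofReal C * eLpNorm (Ff N) 2 volume * eLpNorm (Gg N) 2 volume *
      eLpNorm (Hh N) 2 volume =
      ENNReal.ofReal (C * ((N^2)⁻¹/4) ^ (1/2:ℝ) * ((N^2)⁻¹) ^ (1/2:ℝ) *
        ((N^2)⁻¹/4) ^ (1/2:ℝ)) := by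
    rw [eF, eG, eH, ← ENNReal.ofReal_mul hC.le, ← ENNReal.ofReal_mul (by positivity),
      ← ENNReal.ofReal_mul (by positivity)]
  rw [hR] at hmain
  have hIle : (∫ τ : ℝ, ∫ ξ : ℝ, ∫ τ₁ : ℝ, ∫ ξ₁ : ℝ, Wint s₁ s₂ b₁ b₂ N τ ξ τ₁ ξ₁) ≤
      C * ((N^2)⁻¹/4) ^ (1/2:ℝ) * ((N^2)⁻¹) ^ (1/2:ℝ) * ((N^2)⁻¹/4) ^ (1/2:ℝ) :=
    (ENNReal.ofReal_le_ofReal_iff (by positivity)).1 hmain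
  have hlow := Wint_integral_lower s₁ s₂ b₁ b₂ N hN
  have hchain : Kl s₁ s₂ b₁ b₂ * N ^ (s₁ - s₂ - 3 + 3*b₁) *
      (((N^2)⁻¹/2 - 0) * (1/2 - 0) * ((N^2)⁻¹/2 - 0) * (1/2 - 0)) ≤
      C * ((N^2)⁻¹/4) ^ (1/2:ℝ) * ((N^2)⁻¹) ^ (1/2:ℝ) * ((N^2)⁻¹/4) ^ (1/2:ℝ) :=
    le_trans hlow hIle
  -- simplify the rpow quantities
  have hrt : (((N^2)⁻¹/4) ^ (1/2:ℝ)) * (((N^2)⁻¹/4) ^ (1/2:ℝ)) = (N^2)⁻¹/4 := by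
    rw [← Real.rpow_add (by positivity)]
    norm_num
  have hg : ((N^2)⁻¹ : ℝ) ^ (1/2:ℝ) = N⁻¹ := by
    rw [Real.inv_rpow (by positivity), ← Real.rpow_natCast N 2, ← Real.rpow_mul hN0.le]
    norm_num
  have hchain2 : Kl s₁ s₂ b₁ b₂ * N ^ (s₁ - s₂ - 3 + 3*b₁) * (((N^2)⁻¹)^2/16) ≤
      C * N⁻¹ * ((N^2)⁻¹/4) := by
    calc Kl s₁ s₂ b₁ b₂ * N ^ (s₁ - s₂ - 3 + 3*b₁) * (((N^2)⁻¹)^2/16)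
        = Kl s₁ s₂ b₁ b₂ * N ^ (s₁ - s₂ - 3 + 3*b₁) *
          (((N^2)⁻¹/2 - 0) * (1/2 - 0) * ((N^2)⁻¹/2 - 0) * (1/2 - 0)) := by ring
      _ ≤ C * ((N^2)⁻¹/4) ^ (1/2:ℝ) * ((N^2)⁻¹) ^ (1/2:ℝ) * ((N^2)⁻¹/4) ^ (1/2:ℝ) := hchain
      _ = C * ((N^2)⁻¹) ^ (1/2:ℝ) * (((N^2)⁻¹/4) ^ (1/2:ℝ) * ((N^2)⁻¹/4) ^ (1/2:ℝ)) := by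
          ring
      _ = C * N⁻¹ * ((N^2)⁻¹/4) := by rw [hrt, hg]
  -- conclude
  have hKl := Kl_pos s₁ s₂ b₁ b₂
  rw [show s₁ - s₂ + 3*b₁ - 4 = (s₁ - s₂ - 3 + 3*b₁) - 1 by ring, Real.rpow_sub hN0,
    Real.rpow_one, div_le_div_iff₀ hN0 hKl]
  have hNe : N ≠ 0 := ne_of_gt hN0
  have hP0 : (0:ℝ) < N ^ (s₁ - s₂ - 3 + 3*b₁) := Real.rpow_pos_of_pos hN0 _
  field_simp at hchain2
  have hpos16 : (0:ℝ) ≤ (N^2)^2*16 := by positivity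
  have hstep := mul_le_mul_of_nonneg_right hchain2 hpos16
  have hl : Kl s₁ s₂ b₁ b₂ * N ^ (s₁ - s₂ - 3 + 3*b₁) / ((N^2)^2*16) * ((N^2)^2*16) =
      Kl s₁ s₂ b₁ b₂ * N ^ (s₁ - s₂ - 3 + 3*b₁) := by field_simp
  have hr : C / (N*(N^2*4)) * ((N^2)^2*16) = 4*C*N := by field_simp; ring
  linarith [hchain2]

/-- Necessity in Bourgain-space duality form: if there are `b₁ > 1/2` and `b₂` such that
the trilinear convolution estimate holds for all nonnegative `f, g, h ∈ L²(ℝ²)`,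
then `s₂ > s₁ - 5/2`. -/
theorem bourgain_trilinear_necessity (s₁ s₂ b₁ b₂ : ℝ) (hb₁ : 1/2 < b₁)
    (h : ∃ C : ℝ, 0 < C ∧ ∀ f g h' : ℝ × ℝ → ℝ,
      (∀ p, 0 ≤ f p) → (∀ p, 0 ≤ g p) → (∀ p, 0 ≤ h' p) →
      ENNReal.ofReal (∫ τ : ℝ, ∫ ξ : ℝ, ∫ τ₁ : ℝ, ∫ ξ₁ : ℝ,
        jap ξ ^ s₁ * f (τ₁, ξ₁) * g (τ - τ₁, ξ - ξ₁) * h' (τ, ξ) /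
          (jap ξ₁ ^ s₁ * jap (ξ - ξ₁) ^ s₂ * jap (τ₁ + ξ₁ ^ 2) ^ b₁ *
            jap ((τ - τ₁) - (ξ - ξ₁) ^ 3) ^ b₂ * jap (τ + ξ ^ 2) ^ (1 - b₁))) ≤
        ENNReal.ofReal C * eLpNorm f 2 volume * eLpNorm g 2 volume *
          eLpNorm h' 2 volume) :
    s₁ - 5/2 < s₂ := by
  by_contra hcon
  push_neg at hcon
  obtain ⟨C, hC, hmain⟩ := h
  have hKl := Kl_pos s₁ s₂ b₁ b₂
  have key : ∀ N : ℝ, 5 ≤ N → N ^ (s₁ - s₂ + 3*b₁ - 4) ≤ 4 * C / Kl s₁ s₂ b₁ b₂ := by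
    intro N hN
    have h1 := hmain (Ff N) (Gg N) (Hh N) (Ff_nonneg N) (Gg_nonneg N) (Hh_nonneg N)
    exact key_ineq s₁ s₂ b₁ b₂ C N hC hN h1
  have he0 : 0 < s₁ - s₂ + 3*b₁ - 4 := by linarith
  have hA0 : (0:ℝ) < 4 * C / Kl s₁ s₂ b₁ b₂ := div_pos (by linarith) hKl
  set A : ℝ := 4 * C / Kl s₁ s₂ b₁ b₂ with hA
  set N : ℝ := max 5 ((A+1) ^ ((s₁ - s₂ + 3*b₁ - 4)⁻¹ : ℝ)) with hNdef
  have hN5 : (5:ℝ) ≤ N := le_max_left _ _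
  have h1 : (A+1) ^ ((s₁ - s₂ + 3*b₁ - 4)⁻¹ : ℝ) ≤ N := le_max_right _ _
  have h2 : A + 1 ≤ N ^ (s₁ - s₂ + 3*b₁ - 4) := by
    have hb : (0:ℝ) ≤ (A+1) ^ ((s₁ - s₂ + 3*b₁ - 4)⁻¹ : ℝ) :=
      Real.rpow_nonneg (by linarith) _
    have h3 := Real.rpow_le_rpow hb h1 he0.le
    rwa [← Real.rpow_mul (by linarith : (0:ℝ) ≤ A+1),
      inv_mul_cancel₀ he0.ne', Real.rpow_one] at h3
  have h4 := key N hN5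
  linarith
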